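/- Let F and G be distributions with continuous quantile functions. Then Shift_-^{CD}(F,G) = 0 if and only if F is larger than G in the weak stochastic order, i.e., max{F^{-1}(τ) − G^{-1}(ξ), F^{-1}(1−τ) − G^{-1}(1−ξ)} ≥ 0 for all 0.5 < τ, ξ < 1. -/

import Mathlib

open MeasureTheory
open scoped ENNReal

/-- `Shift₊^{CD}` component, as a lower Lebesgue integral. -/
noncomputable def cdShiftPlusL (qF qG : ℝ → ℝ) : ℝ≥0∞ :=
  (1 / 2 : ℝ≥0∞) * ∫⁻ β in Set.Ioo (0:ℝ) 1, ∫⁻ α in Set.Ioo (0:ℝ) 1,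
    (ENNReal.ofReal (max (min (qF ((1 + α) / 2) - qG ((1 + β) / 2))
                              (qF ((1 - α) / 2) - qG ((1 - β) / 2))) 0) +
     ENNReal.ofReal (max (qF ((1 - α) / 2) - qG ((1 + β) / 2)) 0))

private lemma setLIntegral_zero_of_forall {f : ℝ → ℝ≥0∞} {s : Set ℝ}
    (hs : MeasurableSet s) (h : ∀ x ∈ s, f x = 0) :
    ∫⁻ x in s, f x = 0 := by
  calc ∫⁻ x in s, f x = ∫⁻ _ in s, (0:ℝ≥0∞) :=
        setLIntegral_congr_fun hs (fun x hx => h x hx)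
    _ = 0 := lintegral_zero

/-- For distributions with continuous quantile functions,
`Shift₋^{CD}(F,G) = Shift₊^{CD}(G,F) = 0` iff `F` is larger than `G` in the
weak stochastic order. -/
theorem cd_shift_minus_zero_iff_weak_stochastic (qF qG : ℝ → ℝ)
    (hF : MonotoneOn qF (Set.Ioo 0 1)) (hG : MonotoneOn qG (Set.Ioo 0 1))
    (hFc : ContinuousOn qF (Set.Ioo 0 1)) (hGc : ContinuousOn qG (Set.Ioo 0 1)) :
    cdShiftPlusL qG qF = 0 ↔
      (∀ τ ξ : ℝ, 1 / 2 < τ → τ < 1 → 1 / 2 < ξ → ξ < 1 →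
        0 ≤ max (qF τ - qG ξ) (qF (1 - τ) - qG (1 - ξ))) := by
  constructor
  · -- hard direction
    intro h0 τ ξ hτ hτ1 hξ hξ1
    by_contra hneg
    push_neg at hneg
    rw [max_lt_iff] at hneg
    obtain ⟨h1, h2⟩ := hneg
    set ε := min (qG ξ - qF τ) (qG (1-ξ) - qF (1-τ)) with hεdef
    have hεpos : 0 < ε := lt_min (by linarith) (by linarith)
    have hε1 : ε ≤ qG ξ - qF τ := min_le_left _ _
    have hε2 : ε ≤ qG (1-ξ) - qF (1-τ) := min_le_right _ _
    have hξmem : ξ ∈ Set.Ioo (0:ℝ) 1 := ⟨by linarith, hξ1⟩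
    have hξ'mem : (1-ξ) ∈ Set.Ioo (0:ℝ) 1 := ⟨by linarith, by linarith⟩
    have hτmem : τ ∈ Set.Ioo (0:ℝ) 1 := ⟨by linarith, hτ1⟩
    have hτ'mem : (1-τ) ∈ Set.Ioo (0:ℝ) 1 := ⟨by linarith, by linarith⟩
    have cG1 : ContinuousAt qG ξ := hGc.continuousAt (isOpen_Ioo.mem_nhds hξmem)
    have cG2 : ContinuousAt qG (1-ξ) := hGc.continuousAt (isOpen_Ioo.mem_nhds hξ'mem)
    have cF1 : ContinuousAt qF τ := hFc.continuousAt (isOpen_Ioo.mem_nhds hτmem)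
    have cF2 : ContinuousAt qF (1-τ) := hFc.continuousAt (isOpen_Ioo.mem_nhds hτ'mem)
    obtain ⟨δ1, hδ1, H1⟩ := Metric.continuousAt_iff.mp cG1 (ε/4) (by positivity)
    obtain ⟨δ2, hδ2, H2⟩ := Metric.continuousAt_iff.mp cG2 (ε/4) (by positivity)
    obtain ⟨δ3, hδ3, H3⟩ := Metric.continuousAt_iff.mp cF1 (ε/4) (by positivity)
    obtain ⟨δ4, hδ4, H4⟩ := Metric.continuousAt_iff.mp cF2 (ε/4) (by positivity)
    set α₀ := 2*ξ - 1 with hα₀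
    set β₀ := 2*τ - 1 with hβ₀
    have hα₀mem : 0 < α₀ ∧ α₀ < 1 := ⟨by simp [hα₀]; linarith, by simp [hα₀]; linarith⟩
    have hβ₀mem : 0 < β₀ ∧ β₀ < 1 := ⟨by simp [hβ₀]; linarith, by simp [hβ₀]; linarith⟩
    set rα := min (min δ1 δ2) (min α₀ (1-α₀)) with hrα
    set rβ := min (min δ3 δ4) (min β₀ (1-β₀)) with hrβ
    have hrαpos : 0 < rα := lt_min (lt_min hδ1 hδ2) (lt_min hα₀mem.1 (by linarith [hα₀mem.2]))
    have hrβpos : 0 < rβ := lt_min (lt_min hδ3 hδ4) (lt_min hβ₀mem.1 (by linarith [hβ₀mem.2]))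
    set Iα := Set.Ioo (α₀ - rα) (α₀ + rα) with hIα
    set Iβ := Set.Ioo (β₀ - rβ) (β₀ + rβ) with hIβ
    have hIαsub : Iα ⊆ Set.Ioo (0:ℝ) 1 := by
      intro a ⟨ha1, ha2⟩
      have : rα ≤ α₀ := le_trans (min_le_right _ _) (min_le_left _ _)
      have : rα ≤ 1 - α₀ := le_trans (min_le_right _ _) (min_le_right _ _)
      constructor <;> [linarith; linarith]
    have hIβsub : Iβ ⊆ Set.Ioo (0:ℝ) 1 := by
      intro a ⟨ha1, ha2⟩
      have : rβ ≤ β₀ := le_trans (min_le_right _ _) (min_le_left _ _)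
      have : rβ ≤ 1 - β₀ := le_trans (min_le_right _ _) (min_le_right _ _)
      constructor <;> [linarith; linarith]
    -- key pointwise lower bound on the rectangle
    have key : ∀ α ∈ Iα, ∀ β ∈ Iβ,
        ENNReal.ofReal (ε/2) ≤
        (ENNReal.ofReal (max (min (qG ((1 + α) / 2) - qF ((1 + β) / 2))
                              (qG ((1 - α) / 2) - qF ((1 - β) / 2))) 0) +
         ENNReal.ofReal (max (qG ((1 - α) / 2) - qF ((1 + β) / 2)) 0)) := by
      intro α hα β hβ
      obtain ⟨ha1, ha2⟩ := hα
      obtain ⟨hb1, hb2⟩ := hβ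
      have hrαδ1 : rα ≤ δ1 := le_trans (min_le_left _ _) (min_le_left _ _)
      have hrαδ2 : rα ≤ δ2 := le_trans (min_le_left _ _) (min_le_right _ _)
      have hrβδ3 : rβ ≤ δ3 := le_trans (min_le_left _ _) (min_le_left _ _)
      have hrβδ4 : rβ ≤ δ4 := le_trans (min_le_left _ _) (min_le_right _ _)
      have d1 : dist ((1+α)/2) ξ < δ1 := by
        rw [Real.dist_eq, abs_lt]; constructor <;> [simp [hα₀] at ha1 ha2 ⊢; simp [hα₀] at ha1 ha2 ⊢] <;> linarith
      have d2 : dist ((1-α)/2) (1-ξ) < δ2 := by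
        rw [Real.dist_eq, abs_lt]; constructor <;> [simp [hα₀] at ha1 ha2 ⊢; simp [hα₀] at ha1 ha2 ⊢] <;> linarith
      have d3 : dist ((1+β)/2) τ < δ3 := by
        rw [Real.dist_eq, abs_lt]; constructor <;> [simp [hβ₀] at hb1 hb2 ⊢; simp [hβ₀] at hb1 hb2 ⊢] <;> linarith
      have d4 : dist ((1-β)/2) (1-τ) < δ4 := by
        rw [Real.dist_eq, abs_lt]; constructor <;> [simp [hβ₀] at hb1 hb2 ⊢; simp [hβ₀] at hb1 hb2 ⊢] <;> linarith
      have e1 := H1 d1; have e2 := H2 d2; have e3 := H3 d3; have e4 := H4 d4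
      rw [Real.dist_eq, abs_lt] at e1 e2 e3 e4
      have m1 : ε/2 ≤ qG ((1+α)/2) - qF ((1+β)/2) := by linarith [e1.1, e1.2, e3.1, e3.2]
      have m2 : ε/2 ≤ qG ((1-α)/2) - qF ((1-β)/2) := by linarith [e2.1, e2.2, e4.1, e4.2]
      have hmin : ε/2 ≤ min (qG ((1 + α) / 2) - qF ((1 + β) / 2))
                        (qG ((1 - α) / 2) - qF ((1 - β) / 2)) := le_min m1 m2
      calc ENNReal.ofReal (ε/2)
          ≤ ENNReal.ofReal (max (min (qG ((1 + α) / 2) - qF ((1 + β) / 2))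
                              (qG ((1 - α) / 2) - qF ((1 - β) / 2))) 0) :=
            ENNReal.ofReal_le_ofReal (le_trans hmin (le_max_left _ _))
        _ ≤ _ := le_self_add
    -- lower bound the integral
    have hvolα : (0:ℝ≥0∞) < volume Iα := by
      rw [hIα, Real.volume_Ioo]
      simp only [ENNReal.ofReal_pos]; linarith
    have hvolβ : (0:ℝ≥0∞) < volume Iβ := by
      rw [hIβ, Real.volume_Ioo]
      simp only [ENNReal.ofReal_pos]; linarith
    have hOuter : (∫⁻ β in Set.Ioo (0:ℝ) 1, ∫⁻ α in Set.Ioo (0:ℝ) 1,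
        (ENNReal.ofReal (max (min (qG ((1 + α) / 2) - qF ((1 + β) / 2))
                              (qG ((1 - α) / 2) - qF ((1 - β) / 2))) 0) +
         ENNReal.ofReal (max (qG ((1 - α) / 2) - qF ((1 + β) / 2)) 0))) = 0 := by
      unfold cdShiftPlusL at h0
      rcases mul_eq_zero.mp h0 with h | h
      · exact absurd h (by norm_num)
      · exact h
    have hlow : ENNReal.ofReal (ε/2) * volume Iα * volume Iβ ≤
        ∫⁻ β in Set.Ioo (0:ℝ) 1, ∫⁻ α in Set.Ioo (0:ℝ) 1,
        (ENNReal.ofReal (max (min (qG ((1 + α) / 2) - qF ((1 + β) / 2))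
                              (qG ((1 - α) / 2) - qF ((1 - β) / 2))) 0) +
         ENNReal.ofReal (max (qG ((1 - α) / 2) - qF ((1 + β) / 2)) 0)) := by
      have step1 : ∀ β ∈ Iβ, ENNReal.ofReal (ε/2) * volume Iα ≤
          ∫⁻ α in Set.Ioo (0:ℝ) 1,
          (ENNReal.ofReal (max (min (qG ((1 + α) / 2) - qF ((1 + β) / 2))
                              (qG ((1 - α) / 2) - qF ((1 - β) / 2))) 0) +
           ENNReal.ofReal (max (qG ((1 - α) / 2) - qF ((1 + β) / 2)) 0)) := by
        intro β hβ
        calc ENNReal.ofReal (ε/2) * volume Iα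
            = ∫⁻ _ in Iα, ENNReal.ofReal (ε/2) := (setLIntegral_const _ _).symm
          _ ≤ ∫⁻ α in Iα,
              (ENNReal.ofReal (max (min (qG ((1 + α) / 2) - qF ((1 + β) / 2))
                              (qG ((1 - α) / 2) - qF ((1 - β) / 2))) 0) +
               ENNReal.ofReal (max (qG ((1 - α) / 2) - qF ((1 + β) / 2)) 0)) := by
              refine lintegral_mono_ae ?_
              exact (ae_restrict_mem measurableSet_Ioo).mono (fun α hα => key α hα β hβ)
          _ ≤ _ := lintegral_mono_set hIαsub
      calc ENNReal.ofReal (ε/2) * volume Iα * volume Iβ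
          = ∫⁻ _ in Iβ, (ENNReal.ofReal (ε/2) * volume Iα) := (setLIntegral_const _ _).symm
        _ ≤ ∫⁻ β in Iβ, ∫⁻ α in Set.Ioo (0:ℝ) 1,
            (ENNReal.ofReal (max (min (qG ((1 + α) / 2) - qF ((1 + β) / 2))
                              (qG ((1 - α) / 2) - qF ((1 - β) / 2))) 0) +
             ENNReal.ofReal (max (qG ((1 - α) / 2) - qF ((1 + β) / 2)) 0)) := by
            refine lintegral_mono_ae ?_
            exact (ae_restrict_mem measurableSet_Ioo).mono step1
        _ ≤ _ := lintegral_mono_set hIβsub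
    rw [hOuter] at hlow
    have : (0:ℝ≥0∞) < ENNReal.ofReal (ε/2) * volume Iα * volume Iβ := by
      apply ENNReal.mul_pos (ne_of_gt (ENNReal.mul_pos ?_ (ne_of_gt hvolα))) (ne_of_gt hvolβ)
      exact ne_of_gt (ENNReal.ofReal_pos.mpr (by linarith))
    exact absurd hlow (not_le.mpr this)
  · -- easy direction
    intro h
    unfold cdShiftPlusL
    rw [setLIntegral_zero_of_forall measurableSet_Ioo ?_, mul_zero]
    intro β hβ
    obtain ⟨hβ1, hβ2⟩ := hβ
    refine setLIntegral_zero_of_forall measurableSet_Ioo ?_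
    intro α hα
    obtain ⟨hα1, hα2⟩ := hα
    have hmax := h ((1+β)/2) ((1+α)/2) (by linarith) (by linarith) (by linarith) (by linarith)
    have eβ : (1:ℝ) - (1+β)/2 = (1-β)/2 := by ring
    have eα : (1:ℝ) - (1+α)/2 = (1-α)/2 := by ring
    rw [eβ, eα] at hmax
    have memα1 : (1+α)/2 ∈ Set.Ioo (0:ℝ) 1 := ⟨by linarith, by linarith⟩
    have memα2 : (1-α)/2 ∈ Set.Ioo (0:ℝ) 1 := ⟨by linarith, by linarith⟩
    have memβ1 : (1+β)/2 ∈ Set.Ioo (0:ℝ) 1 := ⟨by linarith, by linarith⟩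
    have memβ2 : (1-β)/2 ∈ Set.Ioo (0:ℝ) 1 := ⟨by linarith, by linarith⟩
    have hA : min (qG ((1 + α) / 2) - qF ((1 + β) / 2))
              (qG ((1 - α) / 2) - qF ((1 - β) / 2)) ≤ 0 := by
      rcases le_max_iff.mp hmax with hc | hc
      · exact le_trans (min_le_left _ _) (by linarith)
      · exact le_trans (min_le_right _ _) (by linarith)
    have hB : qG ((1 - α) / 2) - qF ((1 + β) / 2) ≤ 0 := by
      rcases le_max_iff.mp hmax with hc | hc
      · have := hG memα2 memα1 (by linarith)
        linarith
      · have := hF memβ2 memβ1 (by linarith)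
        linarith
    rw [max_eq_right hA, max_eq_right hB, ENNReal.ofReal_zero, add_zero]
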